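/- For α > -1 and a complex number s with Re(s) > 0, the Mellin-type integral of the Laguerre polynomial satisfies ∫_0^∞ e^{-u/2} L_n^{α}(u) u^{s-1} du = ((α+1)_n / n!) · 2^s Γ(s) · ₂F₁(-n, s; α+1; 2). -/
import Mathlib


open MeasureTheory

/-- Pochhammer symbol (rising factorial) for a complex argument. -/
noncomputable def poch (z : ℂ) (k : ℕ) : ℂ := ∏ j ∈ Finset.range k, (z + j)

/-- Beta function for complex arguments with positive real parts. -/
noncomputable def betaC (p q : ℂ) : ℂ :=
  Complex.Gamma p * Complex.Gamma q / Complex.Gamma (p + q)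

/-- Terminating Gauss hypergeometric sum ₂F₁(-n, b; c; z). -/
noncomputable def F21 (n : ℕ) (b c z : ℂ) : ℂ :=
  ∑ j ∈ Finset.range (n + 1),
    poch (-(n : ℂ)) j * poch b j / (poch c j * (j.factorial : ℂ)) * z ^ j

/-- Terminating generalized hypergeometric sum ₃F₂(-n, b, c; d, e; 1). -/
noncomputable def F32 (n : ℕ) (b c d e : ℂ) : ℂ :=
  ∑ j ∈ Finset.range (n + 1),
    poch (-(n : ℂ)) j * poch b j * poch c j /
      (poch d j * poch e j * (j.factorial : ℂ))

/-- Gegenbauer polynomial C_k^{(μ)}(x). -/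
noncomputable def geg (k : ℕ) (μ x : ℂ) : ℂ :=
  poch (2 * μ) k / (k.factorial : ℂ) * F21 k ((k : ℂ) + 2 * μ) (μ + 1 / 2) ((1 - x) / 2)

/-- Laguerre polynomial L_n^{(α)}(u). -/
noncomputable def lag (n : ℕ) (α u : ℂ) : ℂ :=
  poch (α + 1) n / (n.factorial : ℂ) *
    ∑ j ∈ Finset.range (n + 1),
      poch (-(n : ℂ)) j / (poch (α + 1) j * (j.factorial : ℂ)) * u ^ j

/-- Jacobi polynomial P_n^{(α,γ)}(t). -/
noncomputable def jac (n : ℕ) (α γ t : ℂ) : ℂ :=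
  poch (α + 1) n / (n.factorial : ℂ) * F21 n ((n : ℂ) + α + γ + 1) (α + 1) ((1 - t) / 2)

/-- Continuous Hahn polynomial p_k(x; A, B, C, D). -/
noncomputable def hahn (k : ℕ) (x A B C D : ℂ) : ℂ :=
  Complex.I ^ k * poch (A + C) k * poch (A + D) k / (k.factorial : ℂ) *
    F32 k ((k : ℂ) + A + B + C + D - 1) (A + Complex.I * x) (A + C) (A + D)

lemma gamma_poch (s : ℂ) (hs : 0 < s.re) (j : ℕ) :
    Complex.Gamma (s + j) = poch s j * Complex.Gamma s := by
  induction j with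
  | zero => simp [poch]
  | succ j ih =>
    have hne : s + j ≠ 0 := by
      intro h
      have : (s + j).re = 0 := by rw [h]; simp
      simp only [Complex.add_re, Complex.natCast_re] at this
      have : (0:ℝ) ≤ (j:ℝ) := Nat.cast_nonneg j
      linarith [Complex.add_re s j ▸ (by simp [Complex.natCast_re] :
        (s + (j:ℂ)).re = s.re + j)]
    have : s + (↑(j + 1) : ℂ) = (s + j) + 1 := by push_cast; ring
    rw [this, Complex.Gamma_add_one _ hne, ih]
    simp only [poch, Finset.prod_range_succ]
    ring

lemma key_integral (w : ℂ) (hw : 0 < w.re) :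
    ∫ t in Set.Ioi (0:ℝ), (t:ℂ) ^ (w - 1) * Complex.exp (-((t:ℂ) / 2))
      = 2 ^ w * Complex.Gamma w := by
  have h := Complex.integral_cpow_mul_exp_neg_mul_Ioi hw (by norm_num : (0:ℝ) < 1/2)
  have heq : ∀ t : ℝ, (t:ℂ) ^ (w - 1) * Complex.exp (-(((1:ℝ)/2 : ℝ) * t))
      = (t:ℂ) ^ (w - 1) * Complex.exp (-((t:ℂ) / 2)) := by
    intro t; congr 1; push_cast; ring_nf
  rw [show ((1:ℂ) / (((1:ℝ)/2 : ℝ) : ℂ)) ^ w = (2:ℂ) ^ w by norm_num] at h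
  rw [← h]
  exact setIntegral_congr_fun measurableSet_Ioi fun t _ => (heq t).symm

lemma key_integrable (w : ℂ) (hw : 0 < w.re) :
    IntegrableOn (fun t : ℝ => (t:ℂ) ^ (w - 1) * Complex.exp (-((t:ℂ) / 2)))
      (Set.Ioi (0:ℝ)) := by
  have := Complex.GammaIntegral_convergent hw
  rw [← mul_zero ((1:ℝ)/2), ← integrableOn_Ioi_comp_mul_left_iff _ _
    (by norm_num : (0:ℝ) < 1/2)] at this
  have hmul : ((((1:ℝ)/2 : ℝ)):ℂ) ^ (w - 1) * (2:ℂ) ^ (w - 1) = 1 := by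
    have h12 : ((((1:ℝ)/2 : ℝ)):ℂ) = (2:ℂ)⁻¹ := by norm_num
    rw [h12, Complex.inv_cpow _ _ (by simp [Complex.arg_eq_pi_iff]; exact Ne.symm Real.pi_ne_zero),
      inv_mul_cancel₀ (by simp [Complex.cpow_eq_zero_iff])]
  refine (IntegrableOn.congr_fun (this.const_mul ((2:ℂ) ^ (w - 1)))
    (fun t (ht : (0:ℝ) < t) => ?_) measurableSet_Ioi)
  have h2 : ((((1:ℝ)/2) * t : ℝ) : ℂ) ^ (w - 1)
      = (Complex.ofReal ((1:ℝ)/2)) ^ (w - 1) * (t:ℂ) ^ (w - 1) := by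
    rw [Complex.ofReal_mul, Complex.mul_cpow_ofReal_nonneg (by norm_num) ht.le]
  have he : ((Real.exp (-((1:ℝ)/2 * t)) : ℝ) : ℂ) = Complex.exp (-((t:ℂ)/2)) := by
    rw [Complex.ofReal_exp]; congr 1; push_cast; ring
  rw [h2, he]
  linear_combination Complex.exp (-((t:ℂ)/2)) * (t:ℂ) ^ (w - 1) * hmul

/-- Mellin-type integral of the Laguerre polynomial. -/
theorem laguerre_mellin_integral (α : ℝ) (hα : -1 < α) (s : ℂ) (hs : 0 < s.re) (n : ℕ) :
    ∫ u in Set.Ioi (0 : ℝ), Complex.exp (-(u / 2)) * lag n (α : ℂ) (u : ℂ) * (u : ℂ) ^ (s - 1)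
      = poch ((α : ℂ) + 1) n / (n.factorial : ℂ) * 2 ^ s * Complex.Gamma s *
          F21 n s ((α : ℂ) + 1) 2 := by
  have hre : ∀ j : ℕ, 0 < (s + (j:ℂ)).re := by
    intro j
    simp only [Complex.add_re, Complex.natCast_re]
    have : (0:ℝ) ≤ (j:ℝ) := Nat.cast_nonneg j
    linarith
  have hsum : ∀ u : ℝ, u ∈ Set.Ioi (0:ℝ) →
      Complex.exp (-(u / 2)) * lag n (α : ℂ) (u : ℂ) * (u : ℂ) ^ (s - 1)
      = ∑ j ∈ Finset.range (n + 1),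
          (poch ((α:ℂ)+1) n / (n.factorial : ℂ) *
            (poch (-(n:ℂ)) j / (poch ((α:ℂ)+1) j * (j.factorial:ℂ)))) *
            ((u:ℂ) ^ (s + j - 1) * Complex.exp (-((u:ℂ)/2))) := by
    intro u hu
    rw [lag, Finset.mul_sum, Finset.mul_sum, Finset.sum_mul]
    refine Finset.sum_congr rfl fun j _ => ?_
    have hu0 : (u:ℂ) ≠ 0 := Complex.ofReal_ne_zero.mpr (ne_of_gt hu)
    have hpow : (u:ℂ) ^ (s + j - 1) = (u:ℂ) ^ (s - 1) * (u:ℂ) ^ (j:ℕ) := by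
      rw [← Complex.cpow_natCast, ← Complex.cpow_add _ _ hu0]
      ring_nf
    rw [hpow]
    ring
  rw [setIntegral_congr_fun measurableSet_Ioi hsum]
  have hint : ∀ j ∈ Finset.range (n + 1),
      IntegrableOn (fun u : ℝ =>
        (poch ((α:ℂ)+1) n / (n.factorial : ℂ) *
          (poch (-(n:ℂ)) j / (poch ((α:ℂ)+1) j * (j.factorial:ℂ)))) *
          ((u:ℂ) ^ (s + j - 1) * Complex.exp (-((u:ℂ)/2)))) (Set.Ioi 0) :=
    fun j _ => (key_integrable (s + j) (hre j)).const_mul _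
  rw [integral_finset_sum _ hint]
  simp_rw [integral_const_mul]
  have hval : ∀ j : ℕ, (∫ u in Set.Ioi (0:ℝ),
      (u:ℂ) ^ (s + j - 1) * Complex.exp (-((u:ℂ)/2)))
      = 2 ^ (s + (j:ℂ)) * Complex.Gamma (s + j) := fun j => key_integral _ (hre j)
  rw [F21, Finset.mul_sum]
  refine Finset.sum_congr rfl fun j _ => ?_
  rw [hval j, gamma_poch s hs j,
    Complex.cpow_add _ _ (two_ne_zero), Complex.cpow_natCast]
  ring
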